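/- Let S ∈ Sym₃,σ(ℝ) and define the matrix-valued function 𝓜(·)S on ℝ³∖{0} by 𝓜(x)S := D_x(−(5/2)(x·Sx)x/|x|⁵), the symmetric gradient of the degree −2 homogeneous part of Φ₀; it is homogeneous of degree −3. Then for all 0 < t < t' < ∞, ∫_{t < |x| < t'} 𝓜(x)S dx = 0 (entrywise). -/

import Mathlib

noncomputable section
open MeasureTheory Metric Real Filter Topology

/-- Three-dimensional Euclidean space. -/
abbrev E3 : Type := EuclideanSpace ℝ (Fin 3)

/-- The `i`-th standard basis vector of `ℝ³`. -/
def e3 (i : Fin 3) : E3 := EuclideanSpace.single i 1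

/-- The quadratic form `x · S x`. -/
def quadForm (S : Matrix (Fin 3) (Fin 3) ℝ) (x : E3) : ℝ := ∑ i, ∑ j, x i * S i j * x j

/-- The matrix-vector product `(S x) i`. -/
def mulVec3 (S : Matrix (Fin 3) (Fin 3) ℝ) (x : E3) (i : Fin 3) : ℝ := ∑ j, S i j * x j

/-- The elementary field `Φ₀ = Φ₀^S`. -/
def Phi0 (S : Matrix (Fin 3) (Fin 3) ℝ) (x : E3) (i : Fin 3) : ℝ :=
  -(5/2) * quadForm S x * x i / ‖x‖^5 - mulVec3 S x i / ‖x‖^5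
    + (5/2) * quadForm S x * x i / ‖x‖^7

/-- The elementary pressure `P₀ = P₀^S`. -/
def P0 (S : Matrix (Fin 3) (Fin 3) ℝ) (x : E3) : ℝ := -5 * quadForm S x / ‖x‖^5

/-- Symmetric gradient `D(u) = (∇u + (∇u)ᵀ)/2` of a vector field, as a 3×3 matrix. -/
def symGrad (u : E3 → Fin 3 → ℝ) (x : E3) : Matrix (Fin 3) (Fin 3) ℝ :=
  Matrix.of fun i j => (fderiv ℝ u x (e3 j) i + fderiv ℝ u x (e3 i) j) / 2

/-- Componentwise Laplacian of a vector field: `(Δu)_i = ∑_j ∂_j ∂_j u_i`. -/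
def vecLap (u : E3 → Fin 3 → ℝ) (x : E3) (i : Fin 3) : ℝ :=
  ∑ j, fderiv ℝ (fun y => fderiv ℝ u y (e3 j) i) x (e3 j)

/-- Gradient of a scalar field. -/
def sgrad (p : E3 → ℝ) (x : E3) (i : Fin 3) : ℝ := fderiv ℝ p x (e3 i)

/-- Divergence of a vector field. -/
def divg (u : E3 → Fin 3 → ℝ) (x : E3) : ℝ := ∑ i, fderiv ℝ u x (e3 i) i

/-- Newtonian stress tensor `σ(u,p) = 2 D(u) - p Id`. -/
def stressT (u : E3 → Fin 3 → ℝ) (p : E3 → ℝ) (x : E3) : Matrix (Fin 3) (Fin 3) ℝ :=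
  Matrix.of fun i j => 2 * symGrad u x i j - p x * (if i = j then 1 else 0)

/-- Frobenius norm of a 3×3 matrix. -/
def matNorm (A : Matrix (Fin 3) (Fin 3) ℝ) : ℝ := Real.sqrt (∑ i, ∑ j, (A i j)^2)

/-- The degree `-2` homogeneous part of `Φ₀`: `x ↦ -(5/2)(x·Sx)x/|x|⁵`. -/
def homPart (S : Matrix (Fin 3) (Fin 3) ℝ) (x : E3) (i : Fin 3) : ℝ :=
  -(5/2) * quadForm S x * x i / ‖x‖^5

namespace Der

def rr (x : E3) : ℝ := ∑ k, x k * x k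

lemma rr_eq_norm (x : E3) : rr x = ‖x‖^2 := by
  rw [EuclideanSpace.norm_eq, Real.sq_sqrt (by positivity)]
  simp [rr, Real.norm_eq_abs, sq_abs, sq]

lemma rr_pos {x : E3} (hx : x ≠ 0) : 0 < rr x := by
  rw [rr_eq_norm]
  have : ‖x‖ ≠ 0 := norm_ne_zero_iff.mpr hx
  positivity

lemma hasFDerivAt_coord (k : Fin 3) (x : E3) :
    HasFDerivAt (fun y : E3 => y k) (EuclideanSpace.proj (𝕜 := ℝ) k) x :=
  (EuclideanSpace.proj (𝕜 := ℝ) k).hasFDerivAt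

def LR (x : E3) : E3 →L[ℝ] ℝ := ∑ k, (2 * x k) • EuclideanSpace.proj (𝕜 := ℝ) k

lemma hasFDerivAt_rr (x : E3) : HasFDerivAt rr (LR x) x := by
  have h : ∀ k ∈ Finset.univ, HasFDerivAt (fun y : E3 => y k * y k)
      ((2 * x k) • EuclideanSpace.proj (𝕜 := ℝ) k) x := by
    intro k _
    have h := (hasFDerivAt_coord k x).mul (hasFDerivAt_coord k x)
    rw [two_mul, add_smul]; exact h
  exact HasFDerivAt.fun_sum h

def LQ (S : Matrix (Fin 3) (Fin 3) ℝ) (x : E3) : E3 →L[ℝ] ℝ :=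
  ∑ k, ∑ l, ((x k * S k l) • EuclideanSpace.proj (𝕜 := ℝ) l
    + (S k l * x l) • EuclideanSpace.proj (𝕜 := ℝ) k)

lemma hasFDerivAt_quadForm (S : Matrix (Fin 3) (Fin 3) ℝ) (x : E3) :
    HasFDerivAt (quadForm S) (LQ S x) x := by
  have h : ∀ k ∈ Finset.univ, HasFDerivAt (fun y : E3 => ∑ l, y k * S k l * y l)
      (∑ l, ((x k * S k l) • EuclideanSpace.proj (𝕜 := ℝ) l
        + (S k l * x l) • EuclideanSpace.proj (𝕜 := ℝ) k)) x := by
    intro k _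
    refine HasFDerivAt.fun_sum ?_
    intro l _
    have h := ((hasFDerivAt_coord k x).mul_const (S k l)).mul (hasFDerivAt_coord l x)
    refine h.congr_fderiv (ContinuousLinearMap.ext fun v => ?_)
    simp only [ContinuousLinearMap.add_apply, ContinuousLinearMap.smul_apply, smul_eq_mul]
    ring
  exact HasFDerivAt.fun_sum h

lemma finmk0 (h : 0 < 3) : (⟨0, h⟩ : Fin 3) = 0 := rfl
lemma finmk1 (h : 1 < 3) : (⟨1, h⟩ : Fin 3) = 1 := rfl
lemma finmk2 (h : 2 < 3) : (⟨2, h⟩ : Fin 3) = 2 := rfl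

lemma rr_rpow {x : E3} (hx : x ≠ 0) (n : ℕ) :
    rr x ^ (-(n : ℝ)/2) = (‖x‖^n)⁻¹ := by
  rw [rr_eq_norm, ← Real.rpow_natCast ‖x‖ 2, ← Real.rpow_mul (norm_nonneg x)]
  rw [show ((2:ℕ) : ℝ) * (-(n:ℝ)/2) = -(n:ℝ) by push_cast; ring, Real.rpow_neg (norm_nonneg x),
    Real.rpow_natCast]

set_option maxHeartbeats 2000000 in
lemma fderiv_homPart (S : Matrix (Fin 3) (Fin 3) ℝ) {x : E3} (hx : x ≠ 0) (i j : Fin 3) :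
    fderiv ℝ (homPart S) x (e3 j) i =
      ((-5/2 : ℝ) * ((mulVec3 S x j + mulVec3 S.transpose x j) * x i
          + quadForm S x * (if i = j then 1 else 0))) / ‖x‖^5
        + ((25/2 : ℝ) * quadForm S x * x i * x j) / ‖x‖^7 := by
  have hrr : rr x ≠ 0 := ne_of_gt (rr_pos hx)
  have hnx : ‖x‖ ≠ 0 := norm_ne_zero_iff.mpr hx
  set p : ℝ := -5/2 with hp
  have hv : HasFDerivAt (fun y => rr y ^ p) ((p * rr x ^ (p - 1)) • LR x) x :=
    (Real.hasDerivAt_rpow_const (Or.inl hrr)).comp_hasFDerivAt x (hasFDerivAt_rr x)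
  set D : Fin 3 → E3 →L[ℝ] ℝ := fun i =>
    (((-5/2 : ℝ) * quadForm S x) * x i) • ((p * rr x ^ (p - 1)) • LR x)
      + (rr x ^ p) • ((((-5/2 : ℝ) * quadForm S x) • EuclideanSpace.proj (𝕜 := ℝ) i)
        + x i • ((-5/2 : ℝ) • LQ S x)) with hD
  have hF : ∀ i, HasFDerivAt (fun y => homPart S y i) (D i) x := by
    intro i
    have hg := ((((hasFDerivAt_quadForm S x).const_mul ((-5/2 : ℝ))).mul
      (hasFDerivAt_coord i x)).mul hv)
    refine HasFDerivAt.congr_of_eventuallyEq hg ?_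
    have hev : ∀ᶠ y in 𝓝 x, y ≠ 0 := eventually_ne_nhds hx
    filter_upwards [hev] with y hy
    have h5 : rr y ^ p = (‖y‖^5)⁻¹ := by
      rw [hp, show (-5/2 : ℝ) = -((5:ℕ):ℝ)/2 by norm_num]
      exact rr_rpow hy 5
    rw [homPart]; simp only [Pi.mul_apply]; rw [h5]; ring
  have hPi : HasFDerivAt (homPart S) (ContinuousLinearMap.pi D) x := hasFDerivAt_pi.2 hF
  rw [hPi.fderiv]
  have h5 : rr x ^ p = (‖x‖^5)⁻¹ := by
    rw [hp, show (-5/2 : ℝ) = -((5:ℕ):ℝ)/2 by norm_num]; exact rr_rpow hx 5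
  have h7 : rr x ^ (p - 1) = (‖x‖^7)⁻¹ := by
    rw [hp, show (-5/2 : ℝ) - 1 = -((7:ℕ):ℝ)/2 by norm_num]; exact rr_rpow hx 7
  show D i (e3 j) = _
  rw [hD]
  fin_cases i <;> fin_cases j <;>
  · simp only [ContinuousLinearMap.add_apply, ContinuousLinearMap.smul_apply,
      ContinuousLinearMap.coe_sum', Finset.sum_apply, PiLp.proj_apply,
      smul_eq_mul, LR, LQ, h5, h7, Fin.sum_univ_three, e3,
      EuclideanSpace.single_apply, mulVec3, quadForm, Matrix.transpose_apply,
      finmk0, finmk1, finmk2]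
    norm_num [Fin.ext_iff, hp]
    field_simp
    ring
end Der

namespace Ann

def ann (t t' : ℝ) : Set E3 := {x : E3 | t < ‖x‖ ∧ ‖x‖ < t'}

lemma measurableSet_ann (t t' : ℝ) : MeasurableSet (ann t t') :=
  ((isOpen_lt continuous_const continuous_norm).inter
    (isOpen_lt continuous_norm continuous_const)).measurableSet

lemma ne_zero_of_mem {t t' : ℝ} (ht : 0 < t) {x : E3} (hx : x ∈ ann t t') : x ≠ 0 := by
  intro h; rw [h] at hx; simp [ann] at hx; linarith [hx.1]

lemma norm_ne_zero_of_mem {t t' : ℝ} (ht : 0 < t) {x : E3} (hx : x ∈ ann t t') : ‖x‖ ≠ 0 :=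
  norm_ne_zero_iff.mpr (ne_zero_of_mem ht hx)

lemma integrableOn_div_pow {t t' : ℝ} (ht : 0 < t) (P : E3 → ℝ) (hP : Continuous P) (n : ℕ) :
    IntegrableOn (fun x => P x / ‖x‖ ^ n) (ann t t') := by
  have hK : IsCompact (closedBall (0:E3) t' \ ball 0 t) :=
    (isCompact_closedBall _ _).diff isOpen_ball
  have hc : ContinuousOn (fun x => P x / ‖x‖ ^ n) (closedBall (0:E3) t' \ ball 0 t) := by
    refine ContinuousOn.div hP.continuousOn (continuous_norm.pow n).continuousOn ?_
    intro x hx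
    have h1 : t ≤ ‖x‖ := by
      have := hx.2; simp [mem_ball, dist_zero_right, not_lt] at this; exact this
    exact pow_ne_zero _ (by linarith)
  refine (hc.integrableOn_compact hK).mono_set ?_
  intro x hx
  refine ⟨?_, ?_⟩
  · simpa [mem_closedBall, dist_zero_right] using le_of_lt hx.2
  · simp [mem_ball, dist_zero_right, not_lt]; exact le_of_lt hx.1

lemma contCoord (k : Fin 3) : Continuous (fun x : E3 => x k) :=
  (EuclideanSpace.proj (𝕜 := ℝ) k).continuous

/-- linear map from a 3×3 matrix -/
def linMap (A : Matrix (Fin 3) (Fin 3) ℝ) : E3 →ₗ[ℝ] E3 where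
  toFun x := WithLp.toLp 2 (fun k => ∑ m, A k m * x m : Fin 3 → ℝ)
  map_add' x y := by
    ext k; simp [Finset.sum_add_distrib, mul_add]
  map_smul' c x := by
    ext k; simp [Finset.mul_sum]; ring_nf
    exact Finset.sum_congr rfl fun m _ => by ring

lemma linMap_apply (A : Matrix (Fin 3) (Fin 3) ℝ) (x : E3) (k : Fin 3) :
    linMap A x k = ∑ m, A k m * x m := rfl

def isoOf (A : Matrix (Fin 3) (Fin 3) ℝ) (hinv : ∀ x : E3, linMap A (linMap A x) = x)
    (hnorm : ∀ x : E3, ∑ k, (linMap A x k)^2 = ∑ k, (x k)^2) : E3 ≃ₗᵢ[ℝ] E3 :=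
  { LinearEquiv.ofInvolutive (linMap A) hinv with
    norm_map' := by
      intro x
      show ‖linMap A x‖ = ‖x‖
      rw [EuclideanSpace.norm_eq, EuclideanSpace.norm_eq]
      congr 1
      simpa [Real.norm_eq_abs, sq_abs] using hnorm x }

lemma isoOf_apply (A) (hinv) (hnorm) (x : E3) (k : Fin 3) :
    (isoOf A hinv hnorm x) k = ∑ m, A k m * x m := rfl

lemma integral_comp_iso (T : E3 ≃ₗᵢ[ℝ] E3) (f : E3 → ℝ) (t t' : ℝ) :
    ∫ x in ann t t', f (T x) = ∫ x in ann t t', f x := by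
  have h3 : T ⁻¹' (ann t t') = ann t t' := by
    ext x; simp [ann, T.norm_map]
  calc ∫ x in ann t t', f (T x) = ∫ x in T ⁻¹' (ann t t'), f (T x) := by rw [h3]
    _ = ∫ x in ann t t', f x :=
      T.measurePreserving.setIntegral_preimage_emb T.toHomeomorph.measurableEmbedding f _

lemma integral_comp_iso' (T : E3 ≃ₗᵢ[ℝ] E3) (f g : E3 → ℝ) (c : ℝ) (t t' : ℝ)
    (h : ∀ x, f (T x) = c * g x) :
    ∫ x in ann t t', f x = c * ∫ x in ann t t', g x := by
  rw [← integral_comp_iso T f t t']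
  calc ∫ x in ann t t', f (T x) = ∫ x in ann t t', c * g x :=
        integral_congr_ae (Filter.Eventually.of_forall fun x => h x)
    _ = c * ∫ x in ann t t', g x := integral_const_mul c g

/-! ### concrete isometries -/

def reflM (v : Fin 3) : Matrix (Fin 3) (Fin 3) ℝ :=
  Matrix.diagonal (fun k => if k = v then -1 else 1)

lemma linMap_diag (d : Fin 3 → ℝ) (x : E3) (k : Fin 3) :
    linMap (Matrix.diagonal d) x k = d k * x k := by
  rw [linMap_apply]
  simp [Matrix.diagonal_apply, ite_mul, Finset.sum_ite_eq]

def reflIso (v : Fin 3) : E3 ≃ₗᵢ[ℝ] E3 :=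
  isoOf (reflM v)
    (fun x => by
      ext k
      rw [show (linMap (reflM v) (linMap (reflM v) x)) k
          = (if k = v then (-1:ℝ) else 1) * ((if k = v then (-1:ℝ) else 1) * x k) by
        rw [reflM, linMap_diag, linMap_diag]]
      by_cases h : k = v <;> simp [h])
    (fun x => by
      refine Finset.sum_congr rfl fun k _ => ?_
      rw [show linMap (reflM v) x k = (if k = v then (-1:ℝ) else 1) * x k from
        linMap_diag _ x k]
      by_cases h : k = v <;> simp [h])

lemma reflIso_apply (v : Fin 3) (x : E3) (k : Fin 3) :
    reflIso v x k = (if k = v then (-1:ℝ) else 1) * x k := linMap_diag _ x k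

def swapM (a b : Fin 3) : Matrix (Fin 3) (Fin 3) ℝ :=
  Matrix.of fun k m => if m = Equiv.swap a b k then 1 else 0

lemma linMap_swap (a b : Fin 3) (x : E3) (k : Fin 3) :
    linMap (swapM a b) x k = x (Equiv.swap a b k) := by
  rw [linMap_apply]
  simp [swapM, ite_mul, Finset.sum_ite_eq']

def swapIso (a b : Fin 3) : E3 ≃ₗᵢ[ℝ] E3 :=
  isoOf (swapM a b)
    (fun x => by
      ext k
      rw [show (linMap (swapM a b) (linMap (swapM a b) x)) k
          = x (Equiv.swap a b (Equiv.swap a b k)) by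
        rw [linMap_swap]; rw [linMap_swap]]
      rw [Equiv.swap_apply_self])
    (fun x => by
      have : ∀ k, linMap (swapM a b) x k = x (Equiv.swap a b k) := linMap_swap a b x
      simp only [this]
      exact Equiv.sum_comp (Equiv.swap a b) (fun m => (x m)^2))

lemma swapIso_apply (a b : Fin 3) (x : E3) (k : Fin 3) :
    swapIso a b x k = x (Equiv.swap a b k) := linMap_swap a b x k

/-! ### 45 degree rotation in the (0,1) plane -/

def rotM : Matrix (Fin 3) (Fin 3) ℝ :=
  let s : ℝ := (Real.sqrt 2)⁻¹
  !![s, s, 0; s, -s, 0; 0, 0, 1]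

lemma hs : (Real.sqrt 2)⁻¹ * (Real.sqrt 2)⁻¹ = 1/2 := by
  rw [← mul_inv]
  rw [Real.mul_self_sqrt (by norm_num)]
  norm_num

lemma rot_apply (x : E3) :
    linMap rotM x 0 = (Real.sqrt 2)⁻¹ * x 0 + (Real.sqrt 2)⁻¹ * x 1
    ∧ linMap rotM x 1 = (Real.sqrt 2)⁻¹ * x 0 - (Real.sqrt 2)⁻¹ * x 1
    ∧ linMap rotM x 2 = x 2 := by
  refine ⟨?_, ?_, ?_⟩
  · rw [linMap_apply, Fin.sum_univ_three]; simp [rotM]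
  · rw [linMap_apply, Fin.sum_univ_three]; simp [rotM]; ring
  · rw [linMap_apply, Fin.sum_univ_three]; simp [rotM]

def rotIso : E3 ≃ₗᵢ[ℝ] E3 :=
  isoOf rotM
    (fun x => by
      ext k
      obtain ⟨h0, h1, h2⟩ := rot_apply (linMap rotM x)
      obtain ⟨g0, g1, g2⟩ := rot_apply x
      fin_cases k
      · show linMap rotM (linMap rotM x) 0 = x 0
        rw [h0, g0, g1]; linear_combination (x 0 * 2) * hs
      · show linMap rotM (linMap rotM x) 1 = x 1
        rw [h1, g0, g1]; linear_combination (x 1 * 2) * hs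
      · show linMap rotM (linMap rotM x) 2 = x 2
        rw [h2, g2])
    (fun x => by
      obtain ⟨g0, g1, g2⟩ := rot_apply x
      rw [Fin.sum_univ_three, Fin.sum_univ_three, g0, g1, g2]
      linear_combination (2 * x 0 ^ 2 + 2 * x 1 ^ 2) * hs)

lemma rotIso_apply (x : E3) :
    rotIso x 0 = (Real.sqrt 2)⁻¹ * x 0 + (Real.sqrt 2)⁻¹ * x 1
    ∧ rotIso x 1 = (Real.sqrt 2)⁻¹ * x 0 - (Real.sqrt 2)⁻¹ * x 1
    ∧ rotIso x 2 = x 2 := rot_apply x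


lemma finmk0 (h : 0 < 3) : (⟨0, h⟩ : Fin 3) = 0 := rfl
lemma finmk1 (h : 1 < 3) : (⟨1, h⟩ : Fin 3) = 1 := rfl
lemma finmk2 (h : 2 < 3) : (⟨2, h⟩ : Fin 3) = 2 := rfl

def J2 (t t' : ℝ) (a b : Fin 3) : ℝ := ∫ x in ann t t', x a * x b / ‖x‖^5
def J4 (t t' : ℝ) (a b c d : Fin 3) : ℝ :=
  ∫ x in ann t t', x a * x b * x c * x d / ‖x‖^7

variable (t t' : ℝ)

lemma J2_reflect (v a b : Fin 3) :
    J2 t t' a b = ((if a = v then (-1:ℝ) else 1) * (if b = v then (-1:ℝ) else 1))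
      * J2 t t' a b := by
  have h := integral_comp_iso' (reflIso v) (fun y => y a * y b / ‖y‖^5)
    (fun y => y a * y b / ‖y‖^5)
    ((if a = v then (-1:ℝ) else 1) * (if b = v then (-1:ℝ) else 1)) t t'
    (fun x => by
      simp only [reflIso_apply, (reflIso v).norm_map]
      ring)
  exact h

lemma J4_reflect (v a b c d : Fin 3) :
    J4 t t' a b c d = ((if a = v then (-1:ℝ) else 1) * (if b = v then (-1:ℝ) else 1)
      * ((if c = v then (-1:ℝ) else 1) * (if d = v then (-1:ℝ) else 1))) * J4 t t' a b c d := by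
  have h := integral_comp_iso' (reflIso v) (fun y => y a * y b * y c * y d / ‖y‖^7)
    (fun y => y a * y b * y c * y d / ‖y‖^7)
    ((if a = v then (-1:ℝ) else 1) * (if b = v then (-1:ℝ) else 1)
      * ((if c = v then (-1:ℝ) else 1) * (if d = v then (-1:ℝ) else 1))) t t'
    (fun x => by
      simp only [reflIso_apply, (reflIso v).norm_map]
      ring)
  exact h

lemma J2_swap (u v a b : Fin 3) :
    J2 t t' a b = J2 t t' (Equiv.swap u v a) (Equiv.swap u v b) := by
  have h := integral_comp_iso' (swapIso u v) (fun y => y a * y b / ‖y‖^5)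
    (fun y => y (Equiv.swap u v a) * y (Equiv.swap u v b) / ‖y‖^5) 1 t t'
    (fun x => by
      simp only [swapIso_apply, (swapIso u v).norm_map, one_mul])
  simpa [J2] using h

lemma J4_swap (u v a b c d : Fin 3) :
    J4 t t' a b c d = J4 t t' (Equiv.swap u v a) (Equiv.swap u v b)
      (Equiv.swap u v c) (Equiv.swap u v d) := by
  have h := integral_comp_iso' (swapIso u v) (fun y => y a * y b * y c * y d / ‖y‖^7)
    (fun y => y (Equiv.swap u v a) * y (Equiv.swap u v b) * y (Equiv.swap u v c)
      * y (Equiv.swap u v d) / ‖y‖^7) 1 t t'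
    (fun x => by
      simp only [swapIso_apply, (swapIso u v).norm_map, one_mul])
  simpa [J4] using h

lemma J4_congr (p q r s p' q' r' s' : Fin 3)
    (h : ∀ x : E3, x p * x q * x r * x s = x p' * x q' * x r' * x s') :
    J4 t t' p q r s = J4 t t' p' q' r' s' := by
  unfold J4
  exact integral_congr_ae (Filter.Eventually.of_forall fun x => by simp only []; rw [h x])

lemma J2_off {a b : Fin 3} (h : a ≠ b) : J2 t t' a b = 0 := by
  have hr := J2_reflect t t' a a b
  rw [if_pos rfl, if_neg (Ne.symm h)] at hr
  norm_num at hr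
  linarith

lemma J2_diag (a : Fin 3) : J2 t t' a a = J2 t t' 0 0 := by
  fin_cases a
  · rfl
  · have h := J2_swap t t' 0 1 1 1
    simp only [Equiv.swap_apply_right] at h
    exact h.symm ▸ h.symm
  · have h := J2_swap t t' 0 2 2 2
    simp only [Equiv.swap_apply_right] at h
    exact h.symm ▸ h.symm

lemma J4_zero (v a b c d : Fin 3)
    (h : ((if a = v then (-1:ℝ) else 1) * (if b = v then (-1:ℝ) else 1)
      * ((if c = v then (-1:ℝ) else 1) * (if d = v then (-1:ℝ) else 1))) = -1) :
    J4 t t' a b c d = 0 := by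
  have hr := J4_reflect t t' v a b c d
  rw [h] at hr
  linarith

lemma J4_pair (a b : Fin 3) (hab : a ≠ b) : J4 t t' a a b b = J4 t t' 0 0 1 1 := by
  have h02 : J4 t t' 0 0 2 2 = J4 t t' 0 0 1 1 := by
    have h := J4_swap t t' 1 2 0 0 1 1
    simp [Equiv.swap_apply_def] at h
    exact h.symm
  have h12 : J4 t t' 1 1 2 2 = J4 t t' 0 0 1 1 := by
    have h := J4_swap t t' 0 1 1 1 2 2
    simp [Equiv.swap_apply_def] at h
    exact h.trans h02
  fin_cases a <;> fin_cases b
  · exact absurd rfl hab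
  · rfl
  · exact h02
  · exact J4_congr t t' 1 1 0 0 0 0 1 1 (fun x => by ring)
  · exact absurd rfl hab
  · exact h12
  · exact (J4_congr t t' 2 2 0 0 0 0 2 2 (fun x => by ring)).trans h02
  · exact (J4_congr t t' 2 2 1 1 1 1 2 2 (fun x => by ring)).trans h12
  · exact absurd rfl hab

lemma J4_diag (a : Fin 3) : J4 t t' a a a a = J4 t t' 0 0 0 0 := by
  fin_cases a
  · rfl
  · have h := J4_swap t t' 0 1 1 1 1 1
    simp [Equiv.swap_apply_def] at h
    exact h
  · have h := J4_swap t t' 0 2 2 2 2 2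
    simp [Equiv.swap_apply_def] at h
    exact h

lemma sum_sq_eq_norm (x : E3) :
    x 0 * x 0 + x 1 * x 1 + x 2 * x 2 = ‖x‖^2 := by
  rw [EuclideanSpace.norm_eq, Real.sq_sqrt (by positivity), Fin.sum_univ_three]
  simp [Real.norm_eq_abs, sq_abs]
  ring

lemma J4_e (ht : 0 < t) : J4 t t' 0 0 0 0 = 3 * J4 t t' 0 0 1 1 := by
  have hpt : ∀ x : E3, (fun y : E3 => y 0 * y 0 * y 0 * y 0 / ‖y‖^7) (rotIso x)
      = (1/4) * (x 0 * x 0 * x 0 * x 0 / ‖x‖^7)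
        + ((x 0 * x 0 * x 0 * x 1 / ‖x‖^7)
        + ((3/2) * (x 0 * x 0 * x 1 * x 1 / ‖x‖^7)
        + ((x 0 * x 1 * x 1 * x 1 / ‖x‖^7)
        + (1/4) * (x 1 * x 1 * x 1 * x 1 / ‖x‖^7)))) := by
    intro x
    obtain ⟨g0, g1, g2⟩ := rotIso_apply x
    simp only []
    rw [g0, rotIso.norm_map]
    rw [show ((Real.sqrt 2)⁻¹ * x 0 + (Real.sqrt 2)⁻¹ * x 1)
          * ((Real.sqrt 2)⁻¹ * x 0 + (Real.sqrt 2)⁻¹ * x 1)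
          * ((Real.sqrt 2)⁻¹ * x 0 + (Real.sqrt 2)⁻¹ * x 1)
          * ((Real.sqrt 2)⁻¹ * x 0 + (Real.sqrt 2)⁻¹ * x 1)
        = (1/4) * (x 0 * x 0 * x 0 * x 0) + ((x 0 * x 0 * x 0 * x 1)
          + ((3/2) * (x 0 * x 0 * x 1 * x 1) + ((x 0 * x 1 * x 1 * x 1)
          + (1/4) * (x 1 * x 1 * x 1 * x 1))))
      from by linear_combination ((x 0 + x 1)^4
        * ((Real.sqrt 2)⁻¹ * (Real.sqrt 2)⁻¹ + 1/2)) * hs]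
    ring
  have i1 : Integrable (fun x : E3 => x 0 * x 0 * x 0 * x 0 / ‖x‖^7)
      (volume.restrict (ann t t')) := integrableOn_div_pow ht _
    ((((contCoord 0).mul (contCoord 0)).mul (contCoord 0)).mul (contCoord 0)) 7
  have i2 : Integrable (fun x : E3 => x 0 * x 0 * x 0 * x 1 / ‖x‖^7)
      (volume.restrict (ann t t')) := integrableOn_div_pow ht _
    ((((contCoord 0).mul (contCoord 0)).mul (contCoord 0)).mul (contCoord 1)) 7
  have i3 : Integrable (fun x : E3 => x 0 * x 0 * x 1 * x 1 / ‖x‖^7)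
      (volume.restrict (ann t t')) := integrableOn_div_pow ht _
    ((((contCoord 0).mul (contCoord 0)).mul (contCoord 1)).mul (contCoord 1)) 7
  have i4 : Integrable (fun x : E3 => x 0 * x 1 * x 1 * x 1 / ‖x‖^7)
      (volume.restrict (ann t t')) := integrableOn_div_pow ht _
    ((((contCoord 0).mul (contCoord 1)).mul (contCoord 1)).mul (contCoord 1)) 7
  have i5 : Integrable (fun x : E3 => x 1 * x 1 * x 1 * x 1 / ‖x‖^7)
      (volume.restrict (ann t t')) := integrableOn_div_pow ht _
    ((((contCoord 1).mul (contCoord 1)).mul (contCoord 1)).mul (contCoord 1)) 7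
  have h := integral_comp_iso rotIso (fun y : E3 => y 0 * y 0 * y 0 * y 0 / ‖y‖^7) t t'
  have h2 : ∫ x in ann t t', ((1/4) * (x 0 * x 0 * x 0 * x 0 / ‖x‖^7)
        + ((x 0 * x 0 * x 0 * x 1 / ‖x‖^7)
        + ((3/2) * (x 0 * x 0 * x 1 * x 1 / ‖x‖^7)
        + ((x 0 * x 1 * x 1 * x 1 / ‖x‖^7)
        + (1/4) * (x 1 * x 1 * x 1 * x 1 / ‖x‖^7)))))
      = J4 t t' 0 0 0 0 :=
    (integral_congr_ae (Filter.Eventually.of_forall hpt)).symm.trans h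
  have iS1 : Integrable (fun x : E3 => (1/4) * (x 0 * x 0 * x 0 * x 0 / ‖x‖^7))
      (volume.restrict (ann t t')) := i1.const_mul _
  have iS3 : Integrable (fun x : E3 => (3/2) * (x 0 * x 0 * x 1 * x 1 / ‖x‖^7))
      (volume.restrict (ann t t')) := i3.const_mul _
  have iS5 : Integrable (fun x : E3 => (1/4) * (x 1 * x 1 * x 1 * x 1 / ‖x‖^7))
      (volume.restrict (ann t t')) := i5.const_mul _
  have iR4 : Integrable (fun x : E3 => x 0 * x 1 * x 1 * x 1 / ‖x‖^7
      + (1/4) * (x 1 * x 1 * x 1 * x 1 / ‖x‖^7)) (volume.restrict (ann t t')) := i4.add iS5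
  have iR3 : Integrable (fun x : E3 => (3/2) * (x 0 * x 0 * x 1 * x 1 / ‖x‖^7)
      + (x 0 * x 1 * x 1 * x 1 / ‖x‖^7 + (1/4) * (x 1 * x 1 * x 1 * x 1 / ‖x‖^7)))
      (volume.restrict (ann t t')) := iS3.add iR4
  have iR2 : Integrable (fun x : E3 => x 0 * x 0 * x 0 * x 1 / ‖x‖^7
      + ((3/2) * (x 0 * x 0 * x 1 * x 1 / ‖x‖^7)
      + (x 0 * x 1 * x 1 * x 1 / ‖x‖^7 + (1/4) * (x 1 * x 1 * x 1 * x 1 / ‖x‖^7))))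
      (volume.restrict (ann t t')) := i2.add iR3
  rw [integral_add iS1 iR2, integral_add i2 iR3, integral_add iS3 iR4,
    integral_add i4 iS5, integral_const_mul, integral_const_mul, integral_const_mul] at h2
  have h3 : (1/4) * J4 t t' 0 0 0 0 + (J4 t t' 0 0 0 1 + ((3/2) * J4 t t' 0 0 1 1
      + (J4 t t' 0 1 1 1 + (1/4) * J4 t t' 1 1 1 1))) = J4 t t' 0 0 0 0 := h2
  have z1 : J4 t t' 0 0 0 1 = 0 := J4_zero t t' 1 0 0 0 1 (by norm_num)
  have z2 : J4 t t' 0 1 1 1 = 0 := J4_zero t t' 0 0 1 1 1 (by norm_num)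
  have e1 : J4 t t' 1 1 1 1 = J4 t t' 0 0 0 0 := J4_diag t t' 1
  rw [z1, z2, e1] at h3
  linarith

lemma J2_five (ht : 0 < t) : J2 t t' 0 0 = 5 * J4 t t' 0 0 1 1 := by
  have hpt : ∀ x ∈ ann t t', x 0 * x 0 / ‖x‖^5
      = x 0 * x 0 * x 0 * x 0 / ‖x‖^7
        + (x 0 * x 0 * x 1 * x 1 / ‖x‖^7 + x 0 * x 0 * x 2 * x 2 / ‖x‖^7) := by
    intro x hx
    have hn := norm_ne_zero_of_mem ht hx
    have h2 := sum_sq_eq_norm x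
    field_simp
    linear_combination (-(x 0 ^ 2)) * h2
  have i1 : Integrable (fun x : E3 => x 0 * x 0 * x 0 * x 0 / ‖x‖^7)
      (volume.restrict (ann t t')) := integrableOn_div_pow ht _
    ((((contCoord 0).mul (contCoord 0)).mul (contCoord 0)).mul (contCoord 0)) 7
  have i3 : Integrable (fun x : E3 => x 0 * x 0 * x 1 * x 1 / ‖x‖^7)
      (volume.restrict (ann t t')) := integrableOn_div_pow ht _
    ((((contCoord 0).mul (contCoord 0)).mul (contCoord 1)).mul (contCoord 1)) 7
  have i6 : Integrable (fun x : E3 => x 0 * x 0 * x 2 * x 2 / ‖x‖^7)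
      (volume.restrict (ann t t')) := integrableOn_div_pow ht _
    ((((contCoord 0).mul (contCoord 0)).mul (contCoord 2)).mul (contCoord 2)) 7
  have iR : Integrable (fun x : E3 => x 0 * x 0 * x 1 * x 1 / ‖x‖^7
      + x 0 * x 0 * x 2 * x 2 / ‖x‖^7) (volume.restrict (ann t t')) := i3.add i6
  have hsplit := setIntegral_congr_fun (μ := volume) (measurableSet_ann t t') hpt
  rw [integral_add i1 iR, integral_add i3 i6] at hsplit
  have h3 : J2 t t' 0 0 = J4 t t' 0 0 0 0 + (J4 t t' 0 0 1 1 + J4 t t' 0 0 2 2) := hsplit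
  rw [J4_e t t' ht, J4_pair t t' 0 2 (by decide)] at h3
  linarith

lemma J2_table (ht : 0 < t) (k l : Fin 3) :
    J2 t t' k l = (if k = l then (1:ℝ) else 0) * (5 * J4 t t' 0 0 1 1) := by
  by_cases h : k = l
  · subst h; rw [if_pos rfl, one_mul, J2_diag, J2_five t t' ht]
  · rw [if_neg h, zero_mul, J2_off t t' h]

set_option maxHeartbeats 1600000 in
lemma J4_table (ht : 0 < t) (k l i j : Fin 3) :
    J4 t t' k l i j = ((if k = l then (1:ℝ) else 0) * (if i = j then (1:ℝ) else 0)
      + (if k = i then (1:ℝ) else 0) * (if l = j then (1:ℝ) else 0)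
      + (if k = j then (1:ℝ) else 0) * (if l = i then (1:ℝ) else 0)) * J4 t t' 0 0 1 1 := by
  have hp0011 : J4 t t' 0 0 1 1 = J4 t t' 0 0 1 1 :=
    (J4_congr t t' 0 0 1 1 0 0 1 1 (fun x => by ring)).trans (J4_pair t t' 0 1 (by decide))
  have hp0101 : J4 t t' 0 1 0 1 = J4 t t' 0 0 1 1 :=
    (J4_congr t t' 0 1 0 1 0 0 1 1 (fun x => by ring)).trans (J4_pair t t' 0 1 (by decide))
  have hp0110 : J4 t t' 0 1 1 0 = J4 t t' 0 0 1 1 :=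
    (J4_congr t t' 0 1 1 0 0 0 1 1 (fun x => by ring)).trans (J4_pair t t' 0 1 (by decide))
  have hp1001 : J4 t t' 1 0 0 1 = J4 t t' 0 0 1 1 :=
    (J4_congr t t' 1 0 0 1 0 0 1 1 (fun x => by ring)).trans (J4_pair t t' 0 1 (by decide))
  have hp1010 : J4 t t' 1 0 1 0 = J4 t t' 0 0 1 1 :=
    (J4_congr t t' 1 0 1 0 0 0 1 1 (fun x => by ring)).trans (J4_pair t t' 0 1 (by decide))
  have hp1100 : J4 t t' 1 1 0 0 = J4 t t' 0 0 1 1 :=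
    (J4_congr t t' 1 1 0 0 0 0 1 1 (fun x => by ring)).trans (J4_pair t t' 0 1 (by decide))
  have hp0022 : J4 t t' 0 0 2 2 = J4 t t' 0 0 1 1 :=
    (J4_congr t t' 0 0 2 2 0 0 2 2 (fun x => by ring)).trans (J4_pair t t' 0 2 (by decide))
  have hp0202 : J4 t t' 0 2 0 2 = J4 t t' 0 0 1 1 :=
    (J4_congr t t' 0 2 0 2 0 0 2 2 (fun x => by ring)).trans (J4_pair t t' 0 2 (by decide))
  have hp0220 : J4 t t' 0 2 2 0 = J4 t t' 0 0 1 1 :=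
    (J4_congr t t' 0 2 2 0 0 0 2 2 (fun x => by ring)).trans (J4_pair t t' 0 2 (by decide))
  have hp2002 : J4 t t' 2 0 0 2 = J4 t t' 0 0 1 1 :=
    (J4_congr t t' 2 0 0 2 0 0 2 2 (fun x => by ring)).trans (J4_pair t t' 0 2 (by decide))
  have hp2020 : J4 t t' 2 0 2 0 = J4 t t' 0 0 1 1 :=
    (J4_congr t t' 2 0 2 0 0 0 2 2 (fun x => by ring)).trans (J4_pair t t' 0 2 (by decide))
  have hp2200 : J4 t t' 2 2 0 0 = J4 t t' 0 0 1 1 :=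
    (J4_congr t t' 2 2 0 0 0 0 2 2 (fun x => by ring)).trans (J4_pair t t' 0 2 (by decide))
  have hp1122 : J4 t t' 1 1 2 2 = J4 t t' 0 0 1 1 :=
    (J4_congr t t' 1 1 2 2 1 1 2 2 (fun x => by ring)).trans (J4_pair t t' 1 2 (by decide))
  have hp1212 : J4 t t' 1 2 1 2 = J4 t t' 0 0 1 1 :=
    (J4_congr t t' 1 2 1 2 1 1 2 2 (fun x => by ring)).trans (J4_pair t t' 1 2 (by decide))
  have hp1221 : J4 t t' 1 2 2 1 = J4 t t' 0 0 1 1 :=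
    (J4_congr t t' 1 2 2 1 1 1 2 2 (fun x => by ring)).trans (J4_pair t t' 1 2 (by decide))
  have hp2112 : J4 t t' 2 1 1 2 = J4 t t' 0 0 1 1 :=
    (J4_congr t t' 2 1 1 2 1 1 2 2 (fun x => by ring)).trans (J4_pair t t' 1 2 (by decide))
  have hp2121 : J4 t t' 2 1 2 1 = J4 t t' 0 0 1 1 :=
    (J4_congr t t' 2 1 2 1 1 1 2 2 (fun x => by ring)).trans (J4_pair t t' 1 2 (by decide))
  have hp2211 : J4 t t' 2 2 1 1 = J4 t t' 0 0 1 1 :=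
    (J4_congr t t' 2 2 1 1 1 1 2 2 (fun x => by ring)).trans (J4_pair t t' 1 2 (by decide))
  have he0 : J4 t t' 0 0 0 0 = 3 * J4 t t' 0 0 1 1 :=
    (J4_diag t t' 0).trans (J4_e t t' ht)
  have he1 : J4 t t' 1 1 1 1 = 3 * J4 t t' 0 0 1 1 :=
    (J4_diag t t' 1).trans (J4_e t t' ht)
  have he2 : J4 t t' 2 2 2 2 = 3 * J4 t t' 0 0 1 1 :=
    (J4_diag t t' 2).trans (J4_e t t' ht)
  fin_cases k <;> fin_cases l <;> fin_cases i <;> fin_cases j <;>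
    norm_num [Fin.ext_iff, finmk0, finmk1, finmk2] <;>
    first
      | (refine J4_zero t t' 0 _ _ _ _ ?_; norm_num [Fin.ext_iff]; done)
      | (refine J4_zero t t' 1 _ _ _ _ ?_; norm_num [Fin.ext_iff]; done)
      | (refine J4_zero t t' 2 _ _ _ _ ?_; norm_num [Fin.ext_iff]; done)
      | linarith [hp0011, hp0101, hp0110, hp1001, hp1010, hp1100, hp0022, hp0202, hp0220, hp2002, hp2020, hp2200, hp1122, hp1212, hp1221, hp2112, hp2121, hp2211, he0, he1, he2]


set_option maxHeartbeats 4000000 in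
lemma key (S : Matrix (Fin 3) (Fin 3) ℝ) (ht : 0 < t) (i j : Fin 3) :
    ∫ x in ann t t', (((-5/2 : ℝ) * (mulVec3 S x j * x i + mulVec3 S x i * x j
        + quadForm S x * (if i = j then (1:ℝ) else 0))) / ‖x‖^5
      + ((25/2 : ℝ) * quadForm S x * x i * x j) / ‖x‖^7) = 0 := by
  have h2' : ∀ k l : Fin 3, (∫ x in ann t t', x k * x l / ‖x‖^5)
      = (if k = l then (1:ℝ) else 0) * (5 * J4 t t' 0 0 1 1) := fun k l => J2_table t t' ht k l
  have h4' : ∀ k l i' j' : Fin 3, (∫ x in ann t t', x k * x l * x i' * x j' / ‖x‖^7)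
      = ((if k = l then (1:ℝ) else 0) * (if i' = j' then (1:ℝ) else 0)
      + (if k = i' then (1:ℝ) else 0) * (if l = j' then (1:ℝ) else 0)
      + (if k = j' then (1:ℝ) else 0) * (if l = i' then (1:ℝ) else 0)) * J4 t t' 0 0 1 1 :=
    fun k l i' j' => J4_table t t' ht k l i' j'
  have I0 : Integrable (fun x : E3 => ((-5:ℝ)/2 * S j 0) * (x 0 * x i / ‖x‖^5)) (volume.restrict (ann t t')) :=
    (integrableOn_div_pow ht _ ((contCoord 0).mul (contCoord i)) 5).const_mul _
  have I1 : Integrable (fun x : E3 => ((-5:ℝ)/2 * S j 1) * (x 1 * x i / ‖x‖^5)) (volume.restrict (ann t t')) :=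
    (integrableOn_div_pow ht _ ((contCoord 1).mul (contCoord i)) 5).const_mul _
  have I2 : Integrable (fun x : E3 => ((-5:ℝ)/2 * S j 2) * (x 2 * x i / ‖x‖^5)) (volume.restrict (ann t t')) :=
    (integrableOn_div_pow ht _ ((contCoord 2).mul (contCoord i)) 5).const_mul _
  have I3 : Integrable (fun x : E3 => ((-5:ℝ)/2 * S i 0) * (x 0 * x j / ‖x‖^5)) (volume.restrict (ann t t')) :=
    (integrableOn_div_pow ht _ ((contCoord 0).mul (contCoord j)) 5).const_mul _
  have I4 : Integrable (fun x : E3 => ((-5:ℝ)/2 * S i 1) * (x 1 * x j / ‖x‖^5)) (volume.restrict (ann t t')) :=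
    (integrableOn_div_pow ht _ ((contCoord 1).mul (contCoord j)) 5).const_mul _
  have I5 : Integrable (fun x : E3 => ((-5:ℝ)/2 * S i 2) * (x 2 * x j / ‖x‖^5)) (volume.restrict (ann t t')) :=
    (integrableOn_div_pow ht _ ((contCoord 2).mul (contCoord j)) 5).const_mul _
  have I6 : Integrable (fun x : E3 => ((-5:ℝ)/2 * S 0 0 * (if i = j then (1:ℝ) else 0)) * (x 0 * x 0 / ‖x‖^5)) (volume.restrict (ann t t')) :=
    (integrableOn_div_pow ht _ ((contCoord 0).mul (contCoord 0)) 5).const_mul _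
  have I7 : Integrable (fun x : E3 => ((-5:ℝ)/2 * S 0 1 * (if i = j then (1:ℝ) else 0)) * (x 0 * x 1 / ‖x‖^5)) (volume.restrict (ann t t')) :=
    (integrableOn_div_pow ht _ ((contCoord 0).mul (contCoord 1)) 5).const_mul _
  have I8 : Integrable (fun x : E3 => ((-5:ℝ)/2 * S 0 2 * (if i = j then (1:ℝ) else 0)) * (x 0 * x 2 / ‖x‖^5)) (volume.restrict (ann t t')) :=
    (integrableOn_div_pow ht _ ((contCoord 0).mul (contCoord 2)) 5).const_mul _
  have I9 : Integrable (fun x : E3 => ((-5:ℝ)/2 * S 1 0 * (if i = j then (1:ℝ) else 0)) * (x 1 * x 0 / ‖x‖^5)) (volume.restrict (ann t t')) :=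
    (integrableOn_div_pow ht _ ((contCoord 1).mul (contCoord 0)) 5).const_mul _
  have I10 : Integrable (fun x : E3 => ((-5:ℝ)/2 * S 1 1 * (if i = j then (1:ℝ) else 0)) * (x 1 * x 1 / ‖x‖^5)) (volume.restrict (ann t t')) :=
    (integrableOn_div_pow ht _ ((contCoord 1).mul (contCoord 1)) 5).const_mul _
  have I11 : Integrable (fun x : E3 => ((-5:ℝ)/2 * S 1 2 * (if i = j then (1:ℝ) else 0)) * (x 1 * x 2 / ‖x‖^5)) (volume.restrict (ann t t')) :=
    (integrableOn_div_pow ht _ ((contCoord 1).mul (contCoord 2)) 5).const_mul _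
  have I12 : Integrable (fun x : E3 => ((-5:ℝ)/2 * S 2 0 * (if i = j then (1:ℝ) else 0)) * (x 2 * x 0 / ‖x‖^5)) (volume.restrict (ann t t')) :=
    (integrableOn_div_pow ht _ ((contCoord 2).mul (contCoord 0)) 5).const_mul _
  have I13 : Integrable (fun x : E3 => ((-5:ℝ)/2 * S 2 1 * (if i = j then (1:ℝ) else 0)) * (x 2 * x 1 / ‖x‖^5)) (volume.restrict (ann t t')) :=
    (integrableOn_div_pow ht _ ((contCoord 2).mul (contCoord 1)) 5).const_mul _
  have I14 : Integrable (fun x : E3 => ((-5:ℝ)/2 * S 2 2 * (if i = j then (1:ℝ) else 0)) * (x 2 * x 2 / ‖x‖^5)) (volume.restrict (ann t t')) :=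
    (integrableOn_div_pow ht _ ((contCoord 2).mul (contCoord 2)) 5).const_mul _
  have I15 : Integrable (fun x : E3 => ((25:ℝ)/2 * S 0 0) * (x 0 * x 0 * x i * x j / ‖x‖^7)) (volume.restrict (ann t t')) :=
    (integrableOn_div_pow ht _ ((((contCoord 0).mul (contCoord 0)).mul (contCoord i)).mul (contCoord j)) 7).const_mul _
  have I16 : Integrable (fun x : E3 => ((25:ℝ)/2 * S 0 1) * (x 0 * x 1 * x i * x j / ‖x‖^7)) (volume.restrict (ann t t')) :=
    (integrableOn_div_pow ht _ ((((contCoord 0).mul (contCoord 1)).mul (contCoord i)).mul (contCoord j)) 7).const_mul _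
  have I17 : Integrable (fun x : E3 => ((25:ℝ)/2 * S 0 2) * (x 0 * x 2 * x i * x j / ‖x‖^7)) (volume.restrict (ann t t')) :=
    (integrableOn_div_pow ht _ ((((contCoord 0).mul (contCoord 2)).mul (contCoord i)).mul (contCoord j)) 7).const_mul _
  have I18 : Integrable (fun x : E3 => ((25:ℝ)/2 * S 1 0) * (x 1 * x 0 * x i * x j / ‖x‖^7)) (volume.restrict (ann t t')) :=
    (integrableOn_div_pow ht _ ((((contCoord 1).mul (contCoord 0)).mul (contCoord i)).mul (contCoord j)) 7).const_mul _
  have I19 : Integrable (fun x : E3 => ((25:ℝ)/2 * S 1 1) * (x 1 * x 1 * x i * x j / ‖x‖^7)) (volume.restrict (ann t t')) :=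
    (integrableOn_div_pow ht _ ((((contCoord 1).mul (contCoord 1)).mul (contCoord i)).mul (contCoord j)) 7).const_mul _
  have I20 : Integrable (fun x : E3 => ((25:ℝ)/2 * S 1 2) * (x 1 * x 2 * x i * x j / ‖x‖^7)) (volume.restrict (ann t t')) :=
    (integrableOn_div_pow ht _ ((((contCoord 1).mul (contCoord 2)).mul (contCoord i)).mul (contCoord j)) 7).const_mul _
  have I21 : Integrable (fun x : E3 => ((25:ℝ)/2 * S 2 0) * (x 2 * x 0 * x i * x j / ‖x‖^7)) (volume.restrict (ann t t')) :=
    (integrableOn_div_pow ht _ ((((contCoord 2).mul (contCoord 0)).mul (contCoord i)).mul (contCoord j)) 7).const_mul _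
  have I22 : Integrable (fun x : E3 => ((25:ℝ)/2 * S 2 1) * (x 2 * x 1 * x i * x j / ‖x‖^7)) (volume.restrict (ann t t')) :=
    (integrableOn_div_pow ht _ ((((contCoord 2).mul (contCoord 1)).mul (contCoord i)).mul (contCoord j)) 7).const_mul _
  have I23 : Integrable (fun x : E3 => ((25:ℝ)/2 * S 2 2) * (x 2 * x 2 * x i * x j / ‖x‖^7)) (volume.restrict (ann t t')) :=
    (integrableOn_div_pow ht _ ((((contCoord 2).mul (contCoord 2)).mul (contCoord i)).mul (contCoord j)) 7).const_mul _
  have R23 : Integrable (fun x : E3 => ((25:ℝ)/2 * S 2 2) * (x 2 * x 2 * x i * x j / ‖x‖^7)) (volume.restrict (ann t t')) := I23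
  have R22 : Integrable (fun x : E3 => ((25:ℝ)/2 * S 2 1) * (x 2 * x 1 * x i * x j / ‖x‖^7) + (((25:ℝ)/2 * S 2 2) * (x 2 * x 2 * x i * x j / ‖x‖^7))) (volume.restrict (ann t t')) := I22.add R23
  have R21 : Integrable (fun x : E3 => ((25:ℝ)/2 * S 2 0) * (x 2 * x 0 * x i * x j / ‖x‖^7) + (((25:ℝ)/2 * S 2 1) * (x 2 * x 1 * x i * x j / ‖x‖^7) + (((25:ℝ)/2 * S 2 2) * (x 2 * x 2 * x i * x j / ‖x‖^7)))) (volume.restrict (ann t t')) := I21.add R22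
  have R20 : Integrable (fun x : E3 => ((25:ℝ)/2 * S 1 2) * (x 1 * x 2 * x i * x j / ‖x‖^7) + (((25:ℝ)/2 * S 2 0) * (x 2 * x 0 * x i * x j / ‖x‖^7) + (((25:ℝ)/2 * S 2 1) * (x 2 * x 1 * x i * x j / ‖x‖^7) + (((25:ℝ)/2 * S 2 2) * (x 2 * x 2 * x i * x j / ‖x‖^7))))) (volume.restrict (ann t t')) := I20.add R21
  have R19 : Integrable (fun x : E3 => ((25:ℝ)/2 * S 1 1) * (x 1 * x 1 * x i * x j / ‖x‖^7) + (((25:ℝ)/2 * S 1 2) * (x 1 * x 2 * x i * x j / ‖x‖^7) + (((25:ℝ)/2 * S 2 0) * (x 2 * x 0 * x i * x j / ‖x‖^7) + (((25:ℝ)/2 * S 2 1) * (x 2 * x 1 * x i * x j / ‖x‖^7) + (((25:ℝ)/2 * S 2 2) * (x 2 * x 2 * x i * x j / ‖x‖^7)))))) (volume.restrict (ann t t')) := I19.add R20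
  have R18 : Integrable (fun x : E3 => ((25:ℝ)/2 * S 1 0) * (x 1 * x 0 * x i * x j / ‖x‖^7) + (((25:ℝ)/2 * S 1 1) * (x 1 * x 1 * x i * x j / ‖x‖^7) + (((25:ℝ)/2 * S 1 2) * (x 1 * x 2 * x i * x j / ‖x‖^7) + (((25:ℝ)/2 * S 2 0) * (x 2 * x 0 * x i * x j / ‖x‖^7) + (((25:ℝ)/2 * S 2 1) * (x 2 * x 1 * x i * x j / ‖x‖^7) + (((25:ℝ)/2 * S 2 2) * (x 2 * x 2 * x i * x j / ‖x‖^7))))))) (volume.restrict (ann t t')) := I18.add R19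
  have R17 : Integrable (fun x : E3 => ((25:ℝ)/2 * S 0 2) * (x 0 * x 2 * x i * x j / ‖x‖^7) + (((25:ℝ)/2 * S 1 0) * (x 1 * x 0 * x i * x j / ‖x‖^7) + (((25:ℝ)/2 * S 1 1) * (x 1 * x 1 * x i * x j / ‖x‖^7) + (((25:ℝ)/2 * S 1 2) * (x 1 * x 2 * x i * x j / ‖x‖^7) + (((25:ℝ)/2 * S 2 0) * (x 2 * x 0 * x i * x j / ‖x‖^7) + (((25:ℝ)/2 * S 2 1) * (x 2 * x 1 * x i * x j / ‖x‖^7) + (((25:ℝ)/2 * S 2 2) * (x 2 * x 2 * x i * x j / ‖x‖^7)))))))) (volume.restrict (ann t t')) := I17.add R18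
  have R16 : Integrable (fun x : E3 => ((25:ℝ)/2 * S 0 1) * (x 0 * x 1 * x i * x j / ‖x‖^7) + (((25:ℝ)/2 * S 0 2) * (x 0 * x 2 * x i * x j / ‖x‖^7) + (((25:ℝ)/2 * S 1 0) * (x 1 * x 0 * x i * x j / ‖x‖^7) + (((25:ℝ)/2 * S 1 1) * (x 1 * x 1 * x i * x j / ‖x‖^7) + (((25:ℝ)/2 * S 1 2) * (x 1 * x 2 * x i * x j / ‖x‖^7) + (((25:ℝ)/2 * S 2 0) * (x 2 * x 0 * x i * x j / ‖x‖^7) + (((25:ℝ)/2 * S 2 1) * (x 2 * x 1 * x i * x j / ‖x‖^7) + (((25:ℝ)/2 * S 2 2) * (x 2 * x 2 * x i * x j / ‖x‖^7))))))))) (volume.restrict (ann t t')) := I16.add R17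
  have R15 : Integrable (fun x : E3 => ((25:ℝ)/2 * S 0 0) * (x 0 * x 0 * x i * x j / ‖x‖^7) + (((25:ℝ)/2 * S 0 1) * (x 0 * x 1 * x i * x j / ‖x‖^7) + (((25:ℝ)/2 * S 0 2) * (x 0 * x 2 * x i * x j / ‖x‖^7) + (((25:ℝ)/2 * S 1 0) * (x 1 * x 0 * x i * x j / ‖x‖^7) + (((25:ℝ)/2 * S 1 1) * (x 1 * x 1 * x i * x j / ‖x‖^7) + (((25:ℝ)/2 * S 1 2) * (x 1 * x 2 * x i * x j / ‖x‖^7) + (((25:ℝ)/2 * S 2 0) * (x 2 * x 0 * x i * x j / ‖x‖^7) + (((25:ℝ)/2 * S 2 1) * (x 2 * x 1 * x i * x j / ‖x‖^7) + (((25:ℝ)/2 * S 2 2) * (x 2 * x 2 * x i * x j / ‖x‖^7)))))))))) (volume.restrict (ann t t')) := I15.add R16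
  have R14 : Integrable (fun x : E3 => ((-5:ℝ)/2 * S 2 2 * (if i = j then (1:ℝ) else 0)) * (x 2 * x 2 / ‖x‖^5) + (((25:ℝ)/2 * S 0 0) * (x 0 * x 0 * x i * x j / ‖x‖^7) + (((25:ℝ)/2 * S 0 1) * (x 0 * x 1 * x i * x j / ‖x‖^7) + (((25:ℝ)/2 * S 0 2) * (x 0 * x 2 * x i * x j / ‖x‖^7) + (((25:ℝ)/2 * S 1 0) * (x 1 * x 0 * x i * x j / ‖x‖^7) + (((25:ℝ)/2 * S 1 1) * (x 1 * x 1 * x i * x j / ‖x‖^7) + (((25:ℝ)/2 * S 1 2) * (x 1 * x 2 * x i * x j / ‖x‖^7) + (((25:ℝ)/2 * S 2 0) * (x 2 * x 0 * x i * x j / ‖x‖^7) + (((25:ℝ)/2 * S 2 1) * (x 2 * x 1 * x i * x j / ‖x‖^7) + (((25:ℝ)/2 * S 2 2) * (x 2 * x 2 * x i * x j / ‖x‖^7))))))))))) (volume.restrict (ann t t')) := I14.add R15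
  have R13 : Integrable (fun x : E3 => ((-5:ℝ)/2 * S 2 1 * (if i = j then (1:ℝ) else 0)) * (x 2 * x 1 / ‖x‖^5) + (((-5:ℝ)/2 * S 2 2 * (if i = j then (1:ℝ) else 0)) * (x 2 * x 2 / ‖x‖^5) + (((25:ℝ)/2 * S 0 0) * (x 0 * x 0 * x i * x j / ‖x‖^7) + (((25:ℝ)/2 * S 0 1) * (x 0 * x 1 * x i * x j / ‖x‖^7) + (((25:ℝ)/2 * S 0 2) * (x 0 * x 2 * x i * x j / ‖x‖^7) + (((25:ℝ)/2 * S 1 0) * (x 1 * x 0 * x i * x j / ‖x‖^7) + (((25:ℝ)/2 * S 1 1) * (x 1 * x 1 * x i * x j / ‖x‖^7) + (((25:ℝ)/2 * S 1 2) * (x 1 * x 2 * x i * x j / ‖x‖^7) + (((25:ℝ)/2 * S 2 0) * (x 2 * x 0 * x i * x j / ‖x‖^7) + (((25:ℝ)/2 * S 2 1) * (x 2 * x 1 * x i * x j / ‖x‖^7) + (((25:ℝ)/2 * S 2 2) * (x 2 * x 2 * x i * x j / ‖x‖^7)))))))))))) (volume.restrict (ann t t')) := I13.add R14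
  have R12 : Integrable (fun x : E3 => ((-5:ℝ)/2 * S 2 0 * (if i = j then (1:ℝ) else 0)) * (x 2 * x 0 / ‖x‖^5) + (((-5:ℝ)/2 * S 2 1 * (if i = j then (1:ℝ) else 0)) * (x 2 * x 1 / ‖x‖^5) + (((-5:ℝ)/2 * S 2 2 * (if i = j then (1:ℝ) else 0)) * (x 2 * x 2 / ‖x‖^5) + (((25:ℝ)/2 * S 0 0) * (x 0 * x 0 * x i * x j / ‖x‖^7) + (((25:ℝ)/2 * S 0 1) * (x 0 * x 1 * x i * x j / ‖x‖^7) + (((25:ℝ)/2 * S 0 2) * (x 0 * x 2 * x i * x j / ‖x‖^7) + (((25:ℝ)/2 * S 1 0) * (x 1 * x 0 * x i * x j / ‖x‖^7) + (((25:ℝ)/2 * S 1 1) * (x 1 * x 1 * x i * x j / ‖x‖^7) + (((25:ℝ)/2 * S 1 2) * (x 1 * x 2 * x i * x j / ‖x‖^7) + (((25:ℝ)/2 * S 2 0) * (x 2 * x 0 * x i * x j / ‖x‖^7) + (((25:ℝ)/2 * S 2 1) * (x 2 * x 1 * x i * x j / ‖x‖^7) + (((25:ℝ)/2 * S 2 2)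 * (x 2 * x 2 * x i * x j / ‖x‖^7))))))))))))) (volume.restrict (ann t t')) := I12.add R13
  have R11 : Integrable (fun x : E3 => ((-5:ℝ)/2 * S 1 2 * (if i = j then (1:ℝ) else 0)) * (x 1 * x 2 / ‖x‖^5) + (((-5:ℝ)/2 * S 2 0 * (if i = j then (1:ℝ) else 0)) * (x 2 * x 0 / ‖x‖^5) + (((-5:ℝ)/2 * S 2 1 * (if i = j then (1:ℝ) else 0)) * (x 2 * x 1 / ‖x‖^5) + (((-5:ℝ)/2 * S 2 2 * (if i = j then (1:ℝ) else 0)) * (x 2 * x 2 / ‖x‖^5) + (((25:ℝ)/2 * S 0 0) * (x 0 * x 0 * x i * x j / ‖x‖^7) + (((25:ℝ)/2 * S 0 1) * (x 0 * x 1 * x i * x j / ‖x‖^7) + (((25:ℝ)/2 * S 0 2) * (x 0 * x 2 * x i * x j / ‖x‖^7) + (((25:ℝ)/2 * S 1 0) * (x 1 * x 0 * x i * x j / ‖x‖^7) + (((25:ℝ)/2 * S 1 1) * (x 1 * x 1 * x i * x j / ‖x‖^7) + (((25:ℝ)/2 * S 1 2) * (x 1 * x 2 * x i * x j / ‖x‖^7)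 + (((25:ℝ)/2 * S 2 0) * (x 2 * x 0 * x i * x j / ‖x‖^7) + (((25:ℝ)/2 * S 2 1) * (x 2 * x 1 * x i * x j / ‖x‖^7) + (((25:ℝ)/2 * S 2 2) * (x 2 * x 2 * x i * x j / ‖x‖^7)))))))))))))) (volume.restrict (ann t t')) := I11.add R12
  have R10 : Integrable (fun x : E3 => ((-5:ℝ)/2 * S 1 1 * (if i = j then (1:ℝ) else 0)) * (x 1 * x 1 / ‖x‖^5) + (((-5:ℝ)/2 * S 1 2 * (if i = j then (1:ℝ) else 0)) * (x 1 * x 2 / ‖x‖^5) + (((-5:ℝ)/2 * S 2 0 * (if i = j then (1:ℝ) else 0)) * (x 2 * x 0 / ‖x‖^5) + (((-5:ℝ)/2 * S 2 1 * (if i = j then (1:ℝ) else 0)) * (x 2 * x 1 / ‖x‖^5) + (((-5:ℝ)/2 * S 2 2 * (if i = j then (1:ℝ) else 0)) * (x 2 * x 2 / ‖x‖^5) + (((25:ℝ)/2 * S 0 0) * (x 0 * x 0 * x i * x j / ‖x‖^7) + (((25:ℝ)/2 * S 0 1) * (x 0 * x 1 * x i * x j / ‖x‖^7) + (((25:ℝ)/2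 * S 0 2) * (x 0 * x 2 * x i * x j / ‖x‖^7) + (((25:ℝ)/2 * S 1 0) * (x 1 * x 0 * x i * x j / ‖x‖^7) + (((25:ℝ)/2 * S 1 1) * (x 1 * x 1 * x i * x j / ‖x‖^7) + (((25:ℝ)/2 * S 1 2) * (x 1 * x 2 * x i * x j / ‖x‖^7) + (((25:ℝ)/2 * S 2 0) * (x 2 * x 0 * x i * x j / ‖x‖^7) + (((25:ℝ)/2 * S 2 1) * (x 2 * x 1 * x i * x j / ‖x‖^7) + (((25:ℝ)/2 * S 2 2) * (x 2 * x 2 * x i * x j / ‖x‖^7))))))))))))))) (volume.restrict (ann t t')) := I10.add R11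
  have R9 : Integrable (fun x : E3 => ((-5:ℝ)/2 * S 1 0 * (if i = j then (1:ℝ) else 0)) * (x 1 * x 0 / ‖x‖^5) + (((-5:ℝ)/2 * S 1 1 * (if i = j then (1:ℝ) else 0)) * (x 1 * x 1 / ‖x‖^5) + (((-5:ℝ)/2 * S 1 2 * (if i = j then (1:ℝ) else 0)) * (x 1 * x 2 / ‖x‖^5) + (((-5:ℝ)/2 * S 2 0 * (if i = j then (1:ℝ) else 0)) * (x 2 * x 0 / ‖x‖^5) + (((-5:ℝ)/2 * S 2 1 * (if i = j then (1:ℝ) else 0)) * (x 2 * x 1 / ‖x‖^5) + (((-5:ℝ)/2 * S 2 2 * (if i = j then (1:ℝ) else 0)) * (x 2 * x 2 / ‖x‖^5) + (((25:ℝ)/2 * S 0 0) * (x 0 * x 0 * x i * x j / ‖x‖^7) + (((25:ℝ)/2 * S 0 1) * (x 0 * x 1 * x i * x j / ‖x‖^7) + (((25:ℝ)/2 * S 0 2) * (x 0 * x 2 * x i * x j / ‖x‖^7) + (((25:ℝ)/2 * S 1 0) * (x 1 * x 0 * x i * x j / ‖x‖^7) + (((25:ℝ)/2 * S 1 1) *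 (x 1 * x 1 * x i * x j / ‖x‖^7) + (((25:ℝ)/2 * S 1 2) * (x 1 * x 2 * x i * x j / ‖x‖^7) + (((25:ℝ)/2 * S 2 0) * (x 2 * x 0 * x i * x j / ‖x‖^7) + (((25:ℝ)/2 * S 2 1) * (x 2 * x 1 * x i * x j / ‖x‖^7) + (((25:ℝ)/2 * S 2 2) * (x 2 * x 2 * x i * x j / ‖x‖^7)))))))))))))))) (volume.restrict (ann t t')) := I9.add R10
  have R8 : Integrable (fun x : E3 => ((-5:ℝ)/2 * S 0 2 * (if i = j then (1:ℝ) else 0)) * (x 0 * x 2 / ‖x‖^5) + (((-5:ℝ)/2 * S 1 0 * (if i = j then (1:ℝ) else 0)) * (x 1 * x 0 / ‖x‖^5) + (((-5:ℝ)/2 * S 1 1 * (if i = j then (1:ℝ) else 0)) * (x 1 * x 1 / ‖x‖^5) + (((-5:ℝ)/2 * S 1 2 * (if i = j then (1:ℝ) else 0)) * (x 1 * x 2 / ‖x‖^5) + (((-5:ℝ)/2 * S 2 0 * (if i = j then (1:ℝ) else 0)) * (x 2 * x 0 / ‖x‖^5) + (((-5:ℝ)/2 * S 2 1 * (if i = j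 then (1:ℝ) else 0)) * (x 2 * x 1 / ‖x‖^5) + (((-5:ℝ)/2 * S 2 2 * (if i = j then (1:ℝ) else 0)) * (x 2 * x 2 / ‖x‖^5) + (((25:ℝ)/2 * S 0 0) * (x 0 * x 0 * x i * x j / ‖x‖^7) + (((25:ℝ)/2 * S 0 1) * (x 0 * x 1 * x i * x j / ‖x‖^7) + (((25:ℝ)/2 * S 0 2) * (x 0 * x 2 * x i * x j / ‖x‖^7) + (((25:ℝ)/2 * S 1 0) * (x 1 * x 0 * x i * x j / ‖x‖^7) + (((25:ℝ)/2 * S 1 1) * (x 1 * x 1 * x i * x j / ‖x‖^7) + (((25:ℝ)/2 * S 1 2) * (x 1 * x 2 * x i * x j / ‖x‖^7) + (((25:ℝ)/2 * S 2 0) * (x 2 * x 0 * x i * x j / ‖x‖^7) + (((25:ℝ)/2 * S 2 1) * (x 2 * x 1 * x i * x j / ‖x‖^7) + (((25:ℝ)/2 * S 2 2) * (x 2 * x 2 * x i * x j / ‖x‖^7))))))))))))))))) (volume.restrict (ann t t')) := I8.add R9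
  have R7 : Integrable (fun x : E3 => ((-5:ℝ)/2 * S 0 1 * (if i = j then (1:ℝ) else 0)) * (x 0 * x 1 / ‖x‖^5) + (((-5:ℝ)/2 * S 0 2 * (if i = j then (1:ℝ) else 0)) * (x 0 * x 2 / ‖x‖^5) + (((-5:ℝ)/2 * S 1 0 * (if i = j then (1:ℝ) else 0)) * (x 1 * x 0 / ‖x‖^5) + (((-5:ℝ)/2 * S 1 1 * (if i = j then (1:ℝ) else 0)) * (x 1 * x 1 / ‖x‖^5) + (((-5:ℝ)/2 * S 1 2 * (if i = j then (1:ℝ) else 0)) * (x 1 * x 2 / ‖x‖^5) + (((-5:ℝ)/2 * S 2 0 * (if i = j then (1:ℝ) else 0)) * (x 2 * x 0 / ‖x‖^5) + (((-5:ℝ)/2 * S 2 1 * (if i = j then (1:ℝ) else 0)) * (x 2 * x 1 / ‖x‖^5) + (((-5:ℝ)/2 * S 2 2 * (if i = j then (1:ℝ) else 0)) * (x 2 * x 2 / ‖x‖^5) + (((25:ℝ)/2 * S 0 0) * (x 0 * x 0 * x i * x j / ‖x‖^7) + (((25:ℝ)/2 * S 0 1) * (x 0 * x 1 * x i * x j /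 ‖x‖^7) + (((25:ℝ)/2 * S 0 2) * (x 0 * x 2 * x i * x j / ‖x‖^7) + (((25:ℝ)/2 * S 1 0) * (x 1 * x 0 * x i * x j / ‖x‖^7) + (((25:ℝ)/2 * S 1 1) * (x 1 * x 1 * x i * x j / ‖x‖^7) + (((25:ℝ)/2 * S 1 2) * (x 1 * x 2 * x i * x j / ‖x‖^7) + (((25:ℝ)/2 * S 2 0) * (x 2 * x 0 * x i * x j / ‖x‖^7) + (((25:ℝ)/2 * S 2 1) * (x 2 * x 1 * x i * x j / ‖x‖^7) + (((25:ℝ)/2 * S 2 2) * (x 2 * x 2 * x i * x j / ‖x‖^7)))))))))))))))))) (volume.restrict (ann t t')) := I7.add R8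
  have R6 : Integrable (fun x : E3 => ((-5:ℝ)/2 * S 0 0 * (if i = j then (1:ℝ) else 0)) * (x 0 * x 0 / ‖x‖^5) + (((-5:ℝ)/2 * S 0 1 * (if i = j then (1:ℝ) else 0)) * (x 0 * x 1 / ‖x‖^5) + (((-5:ℝ)/2 * S 0 2 * (if i = j then (1:ℝ) else 0)) * (x 0 * x 2 / ‖x‖^5) + (((-5:ℝ)/2 * S 1 0 * (if i = j then (1:ℝ) else 0)) * (x 1 * x 0 / ‖x‖^5) + (((-5:ℝ)/2 * S 1 1 * (if i = j then (1:ℝ) else 0)) * (x 1 * x 1 / ‖x‖^5) + (((-5:ℝ)/2 * S 1 2 * (if i = j then (1:ℝ) else 0)) * (x 1 * x 2 / ‖x‖^5) + (((-5:ℝ)/2 * S 2 0 * (if i = j then (1:ℝ) else 0)) * (x 2 * x 0 / ‖x‖^5) + (((-5:ℝ)/2 * S 2 1 * (if i = j then (1:ℝ) else 0)) * (x 2 * x 1 / ‖x‖^5) + (((-5:ℝ)/2 * S 2 2 * (if i = j then (1:ℝ) else 0)) * (x 2 * x 2 / ‖x‖^5) + (((25:ℝ)/2 * S 0 0) * (x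 0 * x 0 * x i * x j / ‖x‖^7) + (((25:ℝ)/2 * S 0 1) * (x 0 * x 1 * x i * x j / ‖x‖^7) + (((25:ℝ)/2 * S 0 2) * (x 0 * x 2 * x i * x j / ‖x‖^7) + (((25:ℝ)/2 * S 1 0) * (x 1 * x 0 * x i * x j / ‖x‖^7) + (((25:ℝ)/2 * S 1 1) * (x 1 * x 1 * x i * x j / ‖x‖^7) + (((25:ℝ)/2 * S 1 2) * (x 1 * x 2 * x i * x j / ‖x‖^7) + (((25:ℝ)/2 * S 2 0) * (x 2 * x 0 * x i * x j / ‖x‖^7) + (((25:ℝ)/2 * S 2 1) * (x 2 * x 1 * x i * x j / ‖x‖^7) + (((25:ℝ)/2 * S 2 2) * (x 2 * x 2 * x i * x j / ‖x‖^7))))))))))))))))))) (volume.restrict (ann t t')) := I6.add R7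
  have R5 : Integrable (fun x : E3 => ((-5:ℝ)/2 * S i 2) * (x 2 * x j / ‖x‖^5) + (((-5:ℝ)/2 * S 0 0 * (if i = j then (1:ℝ) else 0)) * (x 0 * x 0 / ‖x‖^5) + (((-5:ℝ)/2 * S 0 1 * (if i = j then (1:ℝ) else 0)) * (x 0 * x 1 / ‖x‖^5) + (((-5:ℝ)/2 * S 0 2 * (if i = j then (1:ℝ) else 0)) * (x 0 * x 2 / ‖x‖^5) + (((-5:ℝ)/2 * S 1 0 * (if i = j then (1:ℝ) else 0)) * (x 1 * x 0 / ‖x‖^5) + (((-5:ℝ)/2 * S 1 1 * (if i = j then (1:ℝ) else 0)) * (x 1 * x 1 / ‖x‖^5) + (((-5:ℝ)/2 * S 1 2 * (if i = j then (1:ℝ) else 0)) * (x 1 * x 2 / ‖x‖^5) + (((-5:ℝ)/2 * S 2 0 * (if i = j then (1:ℝ) else 0)) * (x 2 * x 0 / ‖x‖^5) + (((-5:ℝ)/2 * S 2 1 * (if i = j then (1:ℝ) else 0)) * (x 2 * x 1 / ‖x‖^5) + (((-5:ℝ)/2 * S 2 2 * (if i = j then (1:ℝ) else 0)) * (x 2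 * x 2 / ‖x‖^5) + (((25:ℝ)/2 * S 0 0) * (x 0 * x 0 * x i * x j / ‖x‖^7) + (((25:ℝ)/2 * S 0 1) * (x 0 * x 1 * x i * x j / ‖x‖^7) + (((25:ℝ)/2 * S 0 2) * (x 0 * x 2 * x i * x j / ‖x‖^7) + (((25:ℝ)/2 * S 1 0) * (x 1 * x 0 * x i * x j / ‖x‖^7) + (((25:ℝ)/2 * S 1 1) * (x 1 * x 1 * x i * x j / ‖x‖^7) + (((25:ℝ)/2 * S 1 2) * (x 1 * x 2 * x i * x j / ‖x‖^7) + (((25:ℝ)/2 * S 2 0) * (x 2 * x 0 * x i * x j / ‖x‖^7) + (((25:ℝ)/2 * S 2 1) * (x 2 * x 1 * x i * x j / ‖x‖^7) + (((25:ℝ)/2 * S 2 2) * (x 2 * x 2 * x i * x j / ‖x‖^7)))))))))))))))))))) (volume.restrict (ann t t')) := I5.add R6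
  have R4 : Integrable (fun x : E3 => ((-5:ℝ)/2 * S i 1) * (x 1 * x j / ‖x‖^5) + (((-5:ℝ)/2 * S i 2) * (x 2 * x j / ‖x‖^5) + (((-5:ℝ)/2 * S 0 0 * (if i = j then (1:ℝ) else 0)) * (x 0 * x 0 / ‖x‖^5) + (((-5:ℝ)/2 * S 0 1 * (if i = j then (1:ℝ) else 0)) * (x 0 * x 1 / ‖x‖^5) + (((-5:ℝ)/2 * S 0 2 * (if i = j then (1:ℝ) else 0)) * (x 0 * x 2 / ‖x‖^5) + (((-5:ℝ)/2 * S 1 0 * (if i = j then (1:ℝ) else 0)) * (x 1 * x 0 / ‖x‖^5) + (((-5:ℝ)/2 * S 1 1 * (if i = j then (1:ℝ) else 0)) * (x 1 * x 1 / ‖x‖^5) + (((-5:ℝ)/2 * S 1 2 * (if i = j then (1:ℝ) else 0)) * (x 1 * x 2 / ‖x‖^5) + (((-5:ℝ)/2 * S 2 0 * (if i = j then (1:ℝ) else 0)) * (x 2 * x 0 / ‖x‖^5) + (((-5:ℝ)/2 * S 2 1 * (if i = j then (1:ℝ) else 0)) * (x 2 * x 1 / ‖x‖^5) + (((-5:ℝ)/2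 * S 2 2 * (if i = j then (1:ℝ) else 0)) * (x 2 * x 2 / ‖x‖^5) + (((25:ℝ)/2 * S 0 0) * (x 0 * x 0 * x i * x j / ‖x‖^7) + (((25:ℝ)/2 * S 0 1) * (x 0 * x 1 * x i * x j / ‖x‖^7) + (((25:ℝ)/2 * S 0 2) * (x 0 * x 2 * x i * x j / ‖x‖^7) + (((25:ℝ)/2 * S 1 0) * (x 1 * x 0 * x i * x j / ‖x‖^7) + (((25:ℝ)/2 * S 1 1) * (x 1 * x 1 * x i * x j / ‖x‖^7) + (((25:ℝ)/2 * S 1 2) * (x 1 * x 2 * x i * x j / ‖x‖^7) + (((25:ℝ)/2 * S 2 0) * (x 2 * x 0 * x i * x j / ‖x‖^7) + (((25:ℝ)/2 * S 2 1) * (x 2 * x 1 * x i * x j / ‖x‖^7) + (((25:ℝ)/2 * S 2 2) * (x 2 * x 2 * x i * x j / ‖x‖^7))))))))))))))))))))) (volume.restrict (ann t t')) := I4.add R5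
  have R3 : Integrable (fun x : E3 => ((-5:ℝ)/2 * S i 0) * (x 0 * x j / ‖x‖^5) + (((-5:ℝ)/2 * S i 1) * (x 1 * x j / ‖x‖^5) + (((-5:ℝ)/2 * S i 2) * (x 2 * x j / ‖x‖^5) + (((-5:ℝ)/2 * S 0 0 * (if i = j then (1:ℝ) else 0)) * (x 0 * x 0 / ‖x‖^5) + (((-5:ℝ)/2 * S 0 1 * (if i = j then (1:ℝ) else 0)) * (x 0 * x 1 / ‖x‖^5) + (((-5:ℝ)/2 * S 0 2 * (if i = j then (1:ℝ) else 0)) * (x 0 * x 2 / ‖x‖^5) + (((-5:ℝ)/2 * S 1 0 * (if i = j then (1:ℝ) else 0)) * (x 1 * x 0 / ‖x‖^5) + (((-5:ℝ)/2 * S 1 1 * (if i = j then (1:ℝ) else 0)) * (x 1 * x 1 / ‖x‖^5) + (((-5:ℝ)/2 * S 1 2 * (if i = j then (1:ℝ) else 0)) * (x 1 * x 2 / ‖x‖^5) + (((-5:ℝ)/2 * S 2 0 * (if i = j then (1:ℝ) else 0)) * (x 2 * x 0 / ‖x‖^5) + (((-5:ℝ)/2 * S 2 1 * (if i = j then (1:ℝ)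 else 0)) * (x 2 * x 1 / ‖x‖^5) + (((-5:ℝ)/2 * S 2 2 * (if i = j then (1:ℝ) else 0)) * (x 2 * x 2 / ‖x‖^5) + (((25:ℝ)/2 * S 0 0) * (x 0 * x 0 * x i * x j / ‖x‖^7) + (((25:ℝ)/2 * S 0 1) * (x 0 * x 1 * x i * x j / ‖x‖^7) + (((25:ℝ)/2 * S 0 2) * (x 0 * x 2 * x i * x j / ‖x‖^7) + (((25:ℝ)/2 * S 1 0) * (x 1 * x 0 * x i * x j / ‖x‖^7) + (((25:ℝ)/2 * S 1 1) * (x 1 * x 1 * x i * x j / ‖x‖^7) + (((25:ℝ)/2 * S 1 2) * (x 1 * x 2 * x i * x j / ‖x‖^7) + (((25:ℝ)/2 * S 2 0) * (x 2 * x 0 * x i * x j / ‖x‖^7) + (((25:ℝ)/2 * S 2 1) * (x 2 * x 1 * x i * x j / ‖x‖^7) + (((25:ℝ)/2 * S 2 2) * (x 2 * x 2 * x i * x j / ‖x‖^7)))))))))))))))))))))) (volume.restrict (ann t t')) := I3.add R4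
  have R2 : Integrable (fun x : E3 => ((-5:ℝ)/2 * S j 2) * (x 2 * x i / ‖x‖^5) + (((-5:ℝ)/2 * S i 0) * (x 0 * x j / ‖x‖^5) + (((-5:ℝ)/2 * S i 1) * (x 1 * x j / ‖x‖^5) + (((-5:ℝ)/2 * S i 2) * (x 2 * x j / ‖x‖^5) + (((-5:ℝ)/2 * S 0 0 * (if i = j then (1:ℝ) else 0)) * (x 0 * x 0 / ‖x‖^5) + (((-5:ℝ)/2 * S 0 1 * (if i = j then (1:ℝ) else 0)) * (x 0 * x 1 / ‖x‖^5) + (((-5:ℝ)/2 * S 0 2 * (if i = j then (1:ℝ) else 0)) * (x 0 * x 2 / ‖x‖^5) + (((-5:ℝ)/2 * S 1 0 * (if i = j then (1:ℝ) else 0)) * (x 1 * x 0 / ‖x‖^5) + (((-5:ℝ)/2 * S 1 1 * (if i = j then (1:ℝ) else 0)) * (x 1 * x 1 / ‖x‖^5) + (((-5:ℝ)/2 * S 1 2 * (if i = j then (1:ℝ) else 0)) * (x 1 * x 2 / ‖x‖^5) + (((-5:ℝ)/2 * S 2 0 * (if i = j then (1:ℝ) else 0)) * (x 2 * x 0 /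 ‖x‖^5) + (((-5:ℝ)/2 * S 2 1 * (if i = j then (1:ℝ) else 0)) * (x 2 * x 1 / ‖x‖^5) + (((-5:ℝ)/2 * S 2 2 * (if i = j then (1:ℝ) else 0)) * (x 2 * x 2 / ‖x‖^5) + (((25:ℝ)/2 * S 0 0) * (x 0 * x 0 * x i * x j / ‖x‖^7) + (((25:ℝ)/2 * S 0 1) * (x 0 * x 1 * x i * x j / ‖x‖^7) + (((25:ℝ)/2 * S 0 2) * (x 0 * x 2 * x i * x j / ‖x‖^7) + (((25:ℝ)/2 * S 1 0) * (x 1 * x 0 * x i * x j / ‖x‖^7) + (((25:ℝ)/2 * S 1 1) * (x 1 * x 1 * x i * x j / ‖x‖^7) + (((25:ℝ)/2 * S 1 2) * (x 1 * x 2 * x i * x j / ‖x‖^7) + (((25:ℝ)/2 * S 2 0) * (x 2 * x 0 * x i * x j / ‖x‖^7) + (((25:ℝ)/2 * S 2 1) * (x 2 * x 1 * x i * x j / ‖x‖^7) + (((25:ℝ)/2 * S 2 2) * (x 2 * x 2 * x i * x j / ‖x‖^7))))))))))))))))))))))) (volume.restrict (ann t t')) := I2.add R3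
  have R1 : Integrable (fun x : E3 => ((-5:ℝ)/2 * S j 1) * (x 1 * x i / ‖x‖^5) + (((-5:ℝ)/2 * S j 2) * (x 2 * x i / ‖x‖^5) + (((-5:ℝ)/2 * S i 0) * (x 0 * x j / ‖x‖^5) + (((-5:ℝ)/2 * S i 1) * (x 1 * x j / ‖x‖^5) + (((-5:ℝ)/2 * S i 2) * (x 2 * x j / ‖x‖^5) + (((-5:ℝ)/2 * S 0 0 * (if i = j then (1:ℝ) else 0)) * (x 0 * x 0 / ‖x‖^5) + (((-5:ℝ)/2 * S 0 1 * (if i = j then (1:ℝ) else 0)) * (x 0 * x 1 / ‖x‖^5) + (((-5:ℝ)/2 * S 0 2 * (if i = j then (1:ℝ) else 0)) * (x 0 * x 2 / ‖x‖^5) + (((-5:ℝ)/2 * S 1 0 * (if i = j then (1:ℝ) else 0)) * (x 1 * x 0 / ‖x‖^5) + (((-5:ℝ)/2 * S 1 1 * (if i = j then (1:ℝ) else 0)) * (x 1 * x 1 / ‖x‖^5) + (((-5:ℝ)/2 * S 1 2 * (if i = j then (1:ℝ) else 0)) * (x 1 * x 2 / ‖x‖^5) + (((-5:ℝ)/2 *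 S 2 0 * (if i = j then (1:ℝ) else 0)) * (x 2 * x 0 / ‖x‖^5) + (((-5:ℝ)/2 * S 2 1 * (if i = j then (1:ℝ) else 0)) * (x 2 * x 1 / ‖x‖^5) + (((-5:ℝ)/2 * S 2 2 * (if i = j then (1:ℝ) else 0)) * (x 2 * x 2 / ‖x‖^5) + (((25:ℝ)/2 * S 0 0) * (x 0 * x 0 * x i * x j / ‖x‖^7) + (((25:ℝ)/2 * S 0 1) * (x 0 * x 1 * x i * x j / ‖x‖^7) + (((25:ℝ)/2 * S 0 2) * (x 0 * x 2 * x i * x j / ‖x‖^7) + (((25:ℝ)/2 * S 1 0) * (x 1 * x 0 * x i * x j / ‖x‖^7) + (((25:ℝ)/2 * S 1 1) * (x 1 * x 1 * x i * x j / ‖x‖^7) + (((25:ℝ)/2 * S 1 2) * (x 1 * x 2 * x i * x j / ‖x‖^7) + (((25:ℝ)/2 * S 2 0) * (x 2 * x 0 * x i * x j / ‖x‖^7) + (((25:ℝ)/2 * S 2 1) * (x 2 * x 1 * x i * x j / ‖x‖^7) + (((25:ℝ)/2 * S 2 2) * (x 2 * x 2 * x i * x j / ‖x‖^7))))))))))))))))))))))))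 (volume.restrict (ann t t')) := I1.add R2
  have hstep : ∫ x in ann t t', (((-5/2 : ℝ) * (mulVec3 S x j * x i + mulVec3 S x i * x j
        + quadForm S x * (if i = j then (1:ℝ) else 0))) / ‖x‖^5
      + ((25/2 : ℝ) * quadForm S x * x i * x j) / ‖x‖^7)
      = ∫ x in ann t t', (((-5:ℝ)/2 * S j 0) * (x 0 * x i / ‖x‖^5) + (((-5:ℝ)/2 * S j 1) * (x 1 * x i / ‖x‖^5) + (((-5:ℝ)/2 * S j 2) * (x 2 * x i / ‖x‖^5) + (((-5:ℝ)/2 * S i 0) * (x 0 * x j / ‖x‖^5) + (((-5:ℝ)/2 * S i 1) * (x 1 * x j / ‖x‖^5) + (((-5:ℝ)/2 * S i 2) * (x 2 * x j / ‖x‖^5) + (((-5:ℝ)/2 * S 0 0 * (if i = j then (1:ℝ) else 0)) * (x 0 * x 0 / ‖x‖^5) + (((-5:ℝ)/2 * S 0 1 * (if i = j then (1:ℝ) else 0)) * (x 0 * x 1 / ‖x‖^5) + (((-5:ℝ)/2 * S 0 2 * (if i = j then (1:ℝ) else 0)) * (x 0 * x 2 / ‖x‖^5) + (((-5:ℝ)/2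 * S 1 0 * (if i = j then (1:ℝ) else 0)) * (x 1 * x 0 / ‖x‖^5) + (((-5:ℝ)/2 * S 1 1 * (if i = j then (1:ℝ) else 0)) * (x 1 * x 1 / ‖x‖^5) + (((-5:ℝ)/2 * S 1 2 * (if i = j then (1:ℝ) else 0)) * (x 1 * x 2 / ‖x‖^5) + (((-5:ℝ)/2 * S 2 0 * (if i = j then (1:ℝ) else 0)) * (x 2 * x 0 / ‖x‖^5) + (((-5:ℝ)/2 * S 2 1 * (if i = j then (1:ℝ) else 0)) * (x 2 * x 1 / ‖x‖^5) + (((-5:ℝ)/2 * S 2 2 * (if i = j then (1:ℝ) else 0)) * (x 2 * x 2 / ‖x‖^5) + (((25:ℝ)/2 * S 0 0) * (x 0 * x 0 * x i * x j / ‖x‖^7) + (((25:ℝ)/2 * S 0 1) * (x 0 * x 1 * x i * x j / ‖x‖^7) + (((25:ℝ)/2 * S 0 2) * (x 0 * x 2 * x i * x j / ‖x‖^7) + (((25:ℝ)/2 * S 1 0) * (x 1 * x 0 * x i * x j / ‖x‖^7) + (((25:ℝ)/2 * S 1 1) * (x 1 * x 1 * x i * x j / ‖x‖^7) + (((25:ℝ)/2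 * S 1 2) * (x 1 * x 2 * x i * x j / ‖x‖^7) + (((25:ℝ)/2 * S 2 0) * (x 2 * x 0 * x i * x j / ‖x‖^7) + (((25:ℝ)/2 * S 2 1) * (x 2 * x 1 * x i * x j / ‖x‖^7) + (((25:ℝ)/2 * S 2 2) * (x 2 * x 2 * x i * x j / ‖x‖^7))))))))))))))))))))))))) :=
    setIntegral_congr_fun (μ := volume) (measurableSet_ann t t') (fun x hx => by
      have hn := norm_ne_zero_of_mem ht hx
      simp only [mulVec3, quadForm, Fin.sum_univ_three]
      by_cases hij : i = j
      · simp only [if_pos hij]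
        field_simp
        ring
      · simp only [if_neg hij]
        field_simp
        ring)
  rw [hstep, integral_add I0 R1, integral_add I1 R2, integral_add I2 R3, integral_add I3 R4, integral_add I4 R5, integral_add I5 R6, integral_add I6 R7, integral_add I7 R8, integral_add I8 R9, integral_add I9 R10, integral_add I10 R11, integral_add I11 R12, integral_add I12 R13, integral_add I13 R14, integral_add I14 R15, integral_add I15 R16, integral_add I16 R17, integral_add I17 R18, integral_add I18 R19, integral_add I19 R20, integral_add I20 R21, integral_add I21 R22, integral_add I22 R23]
  simp only [integral_const_mul, h2', h4']
  fin_cases i <;> fin_cases j <;>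
    norm_num [Fin.ext_iff, finmk0, finmk1, finmk2] <;> try ring

end Ann


lemma symGrad_homPart_eq (S : Matrix (Fin 3) (Fin 3) ℝ) (hSsym : S.IsSymm)
    {x : E3} (hx : x ≠ 0) (i j : Fin 3) :
    symGrad (homPart S) x i j
      = ((-5/2 : ℝ) * (mulVec3 S x j * x i + mulVec3 S x i * x j
          + quadForm S x * (if i = j then (1:ℝ) else 0))) / ‖x‖^5
        + ((25/2 : ℝ) * quadForm S x * x i * x j) / ‖x‖^7 := by
  have hT : S.transpose = S := hSsym
  show (fderiv ℝ (homPart S) x (e3 j) i + fderiv ℝ (homPart S) x (e3 i) j) / 2 = _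
  rw [Der.fderiv_homPart S hx i j, Der.fderiv_homPart S hx j i, hT]
  by_cases hij : i = j
  · subst hij; simp only [if_pos rfl]; ring
  · simp only [if_neg hij, if_neg (Ne.symm hij)]; ring

/-- **Vanishing annulus averages of the Calderón–Zygmund kernel `𝓜(·)S`**:
with `𝓜(x)S := D(homPart S)(x)`, for all `0 < t < t'`,
`∫_{t < |x| < t'} 𝓜(x)S dx = 0` entrywise. -/
theorem annulus_integral_M_eq_zero (S : Matrix (Fin 3) (Fin 3) ℝ)
    (hSsym : S.IsSymm) (hStr : S.trace = 0) :
    ∀ t t' : ℝ, 0 < t → t < t' →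
      ∀ i j, ∫ x in {x : E3 | t < ‖x‖ ∧ ‖x‖ < t'}, symGrad (homPart S) x i j = 0 := by
  intro t t' ht htt' i j
  have hcong : ∫ x in Ann.ann t t', symGrad (homPart S) x i j
      = ∫ x in Ann.ann t t', (((-5/2 : ℝ) * (mulVec3 S x j * x i + mulVec3 S x i * x j
          + quadForm S x * (if i = j then (1:ℝ) else 0))) / ‖x‖^5
        + ((25/2 : ℝ) * quadForm S x * x i * x j) / ‖x‖^7) :=
    setIntegral_congr_fun (μ := volume) (Ann.measurableSet_ann t t')
      (fun x hx => symGrad_homPart_eq S hSsym (Ann.ne_zero_of_mem ht hx) i j)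
  exact hcong.trans (Ann.key t t' S ht i j)
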